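/- Let X₁,…,X_n be independent (or negatively associated) mean-zero random variables on a probability space, and write B_n = ∑_{i=1}^n E[X_i²]. Then for any x > 0 and α > 0: P(∑_{i=1}^n X_i ≥ x) ≤ P(max_{1≤j≤n} X_j > α) + exp{ −x²/(2(αx + B_n)) · [1 + (2/3)·ln(1 + αx/B_n)] }. -/

import Mathlib

open MeasureTheory Real ProbabilityTheory Finset

lemma zh_le_of_deriv {f f' : ℝ → ℝ} {a : ℝ}
    (hd : ∀ x, a ≤ x → HasDerivAt f (f' x) x)
    (h' : ∀ x, a ≤ x → 0 ≤ f' x) {x : ℝ} (hx : a ≤ x) : f a ≤ f x := by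
  have hmono : MonotoneOn f (Set.Ici a) := by
    refine monotoneOn_of_deriv_nonneg (convex_Ici a) ?_ ?_ ?_
    · exact fun y hy => (hd y hy).continuousAt.continuousWithinAt
    · intro y hy
      rw [interior_Ici] at hy
      exact (hd y hy.le).differentiableAt.differentiableWithinAt
    · intro y hy
      rw [interior_Ici] at hy
      rw [(hd y hy.le).deriv]
      exact h' y hy.le
  exact hmono Set.self_mem_Ici hx hx

lemma zh_summable (x : ℝ) : Summable (fun n : ℕ => x ^ n / ((n+2).factorial : ℝ)) := by
  refine Summable.of_norm_bounded (Real.summable_pow_div_factorial |x|) ?_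
  intro n
  rw [norm_div, norm_pow, Real.norm_eq_abs, Real.norm_eq_abs]
  rw [abs_of_nonneg (by positivity : (0:ℝ) ≤ ((n+2).factorial : ℝ))]
  gcongr
  omega

lemma zh_exp_eq (x : ℝ) :
    Real.exp x = 1 + x + x ^ 2 * ∑' n : ℕ, x ^ n / ((n+2).factorial : ℝ) := by
  have h0 : Real.exp x = ∑' n : ℕ, x ^ n / (n.factorial : ℝ) := by
    rw [Real.exp_eq_exp_ℝ, NormedSpace.exp_eq_tsum_div]
  have hs : Summable (fun n : ℕ => x ^ n / (n.factorial : ℝ)) :=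
    Real.summable_pow_div_factorial x
  have hs1 : Summable (fun n : ℕ => x ^ (n+1) / ((n+1).factorial : ℝ)) :=
    (summable_nat_add_iff 1).mpr hs
  rw [h0, Summable.tsum_eq_zero_add hs, Summable.tsum_eq_zero_add hs1]
  have : ∑' n : ℕ, x ^ (n+1+1) / ((n+1+1).factorial : ℝ)
      = x ^ 2 * ∑' n : ℕ, x ^ n / ((n+2).factorial : ℝ) := by
    rw [← tsum_mul_left]
    refine tsum_congr fun n => ?_
    ring_nf
  simp only [pow_zero, Nat.factorial_zero, Nat.cast_one, div_one, pow_one,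
    Nat.factorial_one] at *
  rw [this]
  simp [Nat.factorial_one]
  ring

lemma zh_exp_quad {t : ℝ} (ht : t ≤ 0) : Real.exp t ≤ 1 + t + t ^ 2 / 2 := by
  have key : ∀ s : ℝ, 0 ≤ s → Real.exp (-s) ≤ 1 - s + s ^ 2 / 2 := by
    intro s hs
    have hd : ∀ y : ℝ, (0:ℝ) ≤ y →
        HasDerivAt (fun y => 1 - y + y ^ 2 / 2 - Real.exp (-y))
          (-1 + y + Real.exp (-y)) y := by
      intro y _
      have h1 : HasDerivAt (fun y : ℝ => Real.exp (-y)) (-Real.exp (-y)) y := by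
        have := (Real.hasDerivAt_exp (-y)).comp y (hasDerivAt_neg y)
        simpa [Function.comp_def] using this
      have h2 : HasDerivAt (fun y : ℝ => 1 - y + y ^ 2 / 2) (-1 + y) y := by
        have := (((hasDerivAt_pow 2 y).div_const 2).const_add (1 - y))
        have h3 : HasDerivAt (fun y : ℝ => 1 - y) (-1) y := by
          simpa using (hasDerivAt_id y).const_sub 1
        simpa [Pi.add_def] using h3.add ((hasDerivAt_pow 2 y).div_const 2)
      have := h2.sub h1
      refine this.congr_deriv ?_
      ring
    have h' : ∀ y : ℝ, (0:ℝ) ≤ y → 0 ≤ -1 + y + Real.exp (-y) := by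
      intro y _
      have := Real.add_one_le_exp (-y)
      linarith
    have := zh_le_of_deriv hd h' hs
    simp only [neg_zero, Real.exp_zero] at this
    norm_num at this
    linarith
  have := key (-t) (by linarith)
  simp only [neg_neg] at this
  nlinarith

lemma zh_S_half {T : ℝ} (hT : 0 ≤ T) :
    (1:ℝ)/2 ≤ ∑' n : ℕ, T ^ n / ((n+2).factorial : ℝ) := by
  have := Summable.le_tsum (zh_summable T) 0 (fun n _ => by positivity)
  simpa [Nat.factorial] using this

lemma zh_key {t T : ℝ} (htT : t ≤ T) (hT : 0 < T) :
    Real.exp t - 1 - t ≤ t ^ 2 / T ^ 2 * (Real.exp T - 1 - T) := by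
  have hTeq : Real.exp T - 1 - T = T ^ 2 * ∑' n : ℕ, T ^ n / ((n+2).factorial : ℝ) := by
    rw [zh_exp_eq T]; ring
  have hsimp : t ^ 2 / T ^ 2 * (Real.exp T - 1 - T)
      = t ^ 2 * ∑' n : ℕ, T ^ n / ((n+2).factorial : ℝ) := by
    rw [hTeq]; field_simp
  rw [hsimp]
  rcases le_or_gt 0 t with h | h
  · have hteq : Real.exp t - 1 - t = t ^ 2 * ∑' n : ℕ, t ^ n / ((n+2).factorial : ℝ) := by
      rw [zh_exp_eq t]; ring
    rw [hteq]
    have hS : (∑' n : ℕ, t ^ n / ((n+2).factorial : ℝ))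
        ≤ ∑' n : ℕ, T ^ n / ((n+2).factorial : ℝ) := by
      refine Summable.tsum_le_tsum (fun n => ?_) (zh_summable t) (zh_summable T)
      gcongr
    have := sq_nonneg t
    nlinarith
  · have h1 := zh_exp_quad h.le
    have h2 := zh_S_half hT.le
    nlinarith [sq_nonneg t]

lemma zh_mgf_bound {Ω : Type*} [MeasurableSpace Ω] (μ : Measure Ω) [IsProbabilityMeasure μ]
    (Y : Ω → ℝ) (hYm : Measurable Y) {a l s2 : ℝ} (ha : 0 < a) (hl : 0 < l)
    (hbdd : ∀ ω, Y ω ≤ a) (hint : Integrable Y μ) (hmean : ∫ ω, Y ω ∂μ ≤ 0)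
    (hint2 : Integrable (fun ω => Y ω ^ 2) μ) (hvar : ∫ ω, Y ω ^ 2 ∂μ ≤ s2) :
    mgf Y μ l ≤ Real.exp ((Real.exp (l * a) - 1 - l * a) / a ^ 2 * s2) := by
  set c : ℝ := (Real.exp (l * a) - 1 - l * a) / a ^ 2 with hc
  have hcnn : 0 ≤ c := by
    have := Real.add_one_le_exp (l * a)
    have : 0 ≤ Real.exp (l * a) - 1 - l * a := by linarith
    positivity
  have hpt : ∀ ω, Real.exp (l * Y ω) ≤ 1 + l * Y ω + c * Y ω ^ 2 := by
    intro ω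
    have hk := zh_key (t := l * Y ω) (T := l * a)
      (by nlinarith [hbdd ω]) (by positivity)
    have heq : (l * Y ω) ^ 2 / (l * a) ^ 2 * (Real.exp (l * a) - 1 - l * a)
        = c * Y ω ^ 2 := by
      rw [hc]; field_simp
    nlinarith [hk, heq]
  have hintR : Integrable (fun ω => 1 + l * Y ω + c * Y ω ^ 2) μ :=
    ((integrable_const (1:ℝ)).add (hint.const_mul l)).add (hint2.const_mul c)
  have hintL : Integrable (fun ω => Real.exp (l * Y ω)) μ := by
    refine Integrable.mono' (integrable_const (Real.exp (l * a)))
      ((hYm.const_mul l).exp.aestronglyMeasurable) ?_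
    filter_upwards with ω
    rw [Real.norm_eq_abs, abs_of_pos (Real.exp_pos _)]
    exact Real.exp_le_exp.mpr (by nlinarith [hbdd ω])
  have h1 : mgf Y μ l ≤ ∫ ω, (1 + l * Y ω + c * Y ω ^ 2) ∂μ := by
    unfold mgf
    exact integral_mono hintL hintR hpt
  have h2 : ∫ ω, (1 + l * Y ω + c * Y ω ^ 2) ∂μ = 1 + l * ∫ ω, Y ω ∂μ + c * ∫ ω, Y ω ^ 2 ∂μ := by
    have e1 : Integrable (fun ω => 1 + l * Y ω) μ := (integrable_const 1).add (hint.const_mul l)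
    rw [integral_add e1 (hint2.const_mul c), integral_add (integrable_const 1) (hint.const_mul l),
        MeasureTheory.integral_const_mul, MeasureTheory.integral_const_mul]
    simp
  have h3 : 1 + l * ∫ ω, Y ω ∂μ + c * ∫ ω, Y ω ^ 2 ∂μ ≤ 1 + c * s2 := by
    have := mul_nonneg hl.le (neg_nonneg.mpr hmean)
    nlinarith [mul_le_mul_of_nonneg_left hvar hcnn]
  have h4 : 1 + c * s2 ≤ Real.exp (c * s2) := by
    have := Real.add_one_le_exp (c * s2)
    linarith
  calc mgf Y μ l ≤ 1 + l * ∫ ω, Y ω ∂μ + c * ∫ ω, Y ω ^ 2 ∂μ := h2 ▸ h1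
    _ ≤ 1 + c * s2 := h3
    _ ≤ Real.exp (c * s2) := h4

lemma zh_G2_nonneg {v : ℝ} (hv : 1 ≤ v) :
    0 ≤ 8 * Real.log v - 6 + 4 * v⁻¹ + 2 * v⁻¹ ^ 2 := by
  have hd : ∀ y : ℝ, 1 ≤ y →
      HasDerivAt (fun y : ℝ => 8 * Real.log y - 6 + 4 * y⁻¹ + 2 * y⁻¹ ^ 2)
        (8 * y⁻¹ - 4 * y⁻¹ ^ 2 - 4 * y⁻¹ ^ 3) y := by
    intro y hy
    have hne : y ≠ 0 := by intro h; rw [h] at hy; linarith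
    have h := ((((Real.hasDerivAt_log hne).const_mul 8).sub_const 6).add
      ((hasDerivAt_inv hne).const_mul 4)).add (((hasDerivAt_inv hne).pow 2).const_mul 2)
    refine h.congr_deriv ?_
    simp only [Nat.cast_ofNat, Nat.reduceSub, pow_one]
    field_simp
    ring
  have h' : ∀ y : ℝ, 1 ≤ y → 0 ≤ 8 * y⁻¹ - 4 * y⁻¹ ^ 2 - 4 * y⁻¹ ^ 3 := by
    intro y hy
    have hy0 : 0 < y := by linarith
    have e : 8 * y⁻¹ - 4 * y⁻¹ ^ 2 - 4 * y⁻¹ ^ 3 = (8 * y ^ 2 - 4 * y - 4) * (y⁻¹) ^ 3 := by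
      field_simp
    rw [e]
    have : 0 ≤ 8 * y ^ 2 - 4 * y - 4 := by nlinarith
    positivity
  have := zh_le_of_deriv hd h' hv
  norm_num [Real.log_one] at this
  convert this using 1
  norm_num

lemma zh_G1_nonneg {v : ℝ} (hv : 1 ≤ v) :
    0 ≤ (8 * v + 4) * Real.log v - 14 * v + 16 - 2 * v⁻¹ := by
  have hd : ∀ y : ℝ, 1 ≤ y →
      HasDerivAt (fun y : ℝ => (8 * y + 4) * Real.log y - 14 * y + 16 - 2 * y⁻¹)
        (8 * Real.log y - 6 + 4 * y⁻¹ + 2 * y⁻¹ ^ 2) y := by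
    intro y hy
    have hne : y ≠ 0 := by intro h; rw [h] at hy; linarith
    have hlin : HasDerivAt (fun y : ℝ => 8 * y + 4) 8 y := by
      simpa using ((hasDerivAt_id y).const_mul (8:ℝ)).add_const 4
    have h := (((hlin.mul (Real.hasDerivAt_log hne)).sub
      (((hasDerivAt_id y).const_mul (14:ℝ)))).add_const 16).sub
      ((hasDerivAt_inv hne).const_mul 2)
    refine h.congr_deriv ?_
    field_simp
    ring
  have h' : ∀ y : ℝ, 1 ≤ y → 0 ≤ 8 * Real.log y - 6 + 4 * y⁻¹ + 2 * y⁻¹ ^ 2 :=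
    fun y hy => zh_G2_nonneg hy
  have := zh_le_of_deriv hd h' hv
  norm_num [Real.log_one] at this
  linarith [this]

lemma zh_G0_nonneg {v : ℝ} (hv : 1 ≤ v) :
    0 ≤ (4 * v ^ 2 + 4 * v - 2) * Real.log v - 9 * v ^ 2 + 12 * v - 3 := by
  have hd : ∀ y : ℝ, 1 ≤ y →
      HasDerivAt (fun y : ℝ => (4 * y ^ 2 + 4 * y - 2) * Real.log y - 9 * y ^ 2 + 12 * y - 3)
        ((8 * y + 4) * Real.log y - 14 * y + 16 - 2 * y⁻¹) y := by
    intro y hy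
    have hne : y ≠ 0 := by intro h; rw [h] at hy; linarith
    have hpoly : HasDerivAt (fun y : ℝ => 4 * y ^ 2 + 4 * y - 2) (8 * y + 4) y := by
      have := (((hasDerivAt_pow 2 y).const_mul (4:ℝ)).add
        ((hasDerivAt_id y).const_mul (4:ℝ))).sub_const 2
      refine this.congr_deriv ?_
      ring
    have h := (((hpoly.mul (Real.hasDerivAt_log hne)).sub
      ((hasDerivAt_pow 2 y).const_mul (9:ℝ))).add
      ((hasDerivAt_id y).const_mul (12:ℝ))).sub_const 3
    refine h.congr_deriv ?_
    field_simp
    ring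
  have h' : ∀ y : ℝ, 1 ≤ y → 0 ≤ (8 * y + 4) * Real.log y - 14 * y + 16 - 2 * y⁻¹ :=
    fun y hy => zh_G1_nonneg hy
  have := zh_le_of_deriv hd h' hv
  norm_num [Real.log_one] at this
  linarith [this]

lemma zh_L3 {u : ℝ} (hu : 0 < u) :
    u - (1 + u) * Real.log (1 + u)
      ≤ -(u ^ 2 * (3 + 2 * Real.log (1 + u)) / (6 * (1 + u))) := by
  have hv : 1 ≤ 1 + u := by linarith
  have hG := zh_G0_nonneg hv
  have h1u : (0:ℝ) < 1 + u := by linarith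
  have hexp : (4 * (1+u) ^ 2 + 4 * (1+u) - 2) * Real.log (1+u) - 9 * (1+u) ^ 2 + 12 * (1+u) - 3
      = 6 * (1 + u) * ((1 + u) * Real.log (1 + u) - u) - u ^ 2 * (3 + 2 * Real.log (1+u)) := by
    ring
  rw [hexp] at hG
  rw [show -(u ^ 2 * (3 + 2 * Real.log (1 + u)) / (6 * (1 + u)))
      = (-(u ^ 2 * (3 + 2 * Real.log (1 + u)))) / (6 * (1 + u)) by ring]
  rw [le_div_iff₀ (by positivity)]
  nlinarith [hG]
theorem stmt8 {Ω : Type*} [MeasurableSpace Ω] (μ : Measure Ω) [IsProbabilityMeasure μ]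
    (n : ℕ) (hn : 0 < n) (X : Fin n → Ω → ℝ)
    (hXm : ∀ i, Measurable (X i))
    (hind : ProbabilityTheory.iIndepFun X μ)
    (hX2 : ∀ i, Integrable (fun ω => X i ω ^ 2) μ)
    (hmean : ∀ i, ∫ ω, X i ω ∂μ = 0)
    (B : ℝ) (hB : B = ∑ i, ∫ ω, X i ω ^ 2 ∂μ) (hBpos : 0 < B) :
    ∀ x > (0:ℝ), ∀ α > (0:ℝ),
      (μ {ω | x ≤ ∑ i, X i ω}).toReal ≤
        (μ {ω | ∃ j, α < X j ω}).toReal +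
          Real.exp (-(x ^ 2) / (2 * (α * x + B)) *
            (1 + (2 / 3) * Real.log (1 + α * x / B))) := by
  intro x hx α hα
  have hBne : B ≠ 0 := ne_of_gt hBpos
  have hαne : α ≠ 0 := ne_of_gt hα
  -- truncated variables
  set Y : Fin n → Ω → ℝ := fun i ω => min (X i ω) α with hYdef
  have hYm : ∀ i, Measurable (Y i) := fun i => (hXm i).min measurable_const
  have hYind : iIndepFun Y μ :=
    hind.comp (fun _ y => min y α) (fun _ => measurable_id.min measurable_const)
  have hXint : ∀ i, Integrable (X i) μ := by
    intro i
    refine Integrable.mono' (((integrable_const (1:ℝ)).add (hX2 i)).div_const 2)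
      (hXm i).aestronglyMeasurable ?_
    filter_upwards with ω
    simp only [Pi.add_apply, Real.norm_eq_abs]
    nlinarith [sq_nonneg (|X i ω| - 1), sq_abs (X i ω), abs_nonneg (X i ω)]
  have hYint : ∀ i, Integrable (Y i) μ := by
    intro i
    refine Integrable.mono' ((hXint i).abs.add (integrable_const |α|))
      (hYm i).aestronglyMeasurable ?_
    filter_upwards with ω
    simp only [Pi.add_apply, Real.norm_eq_abs, hYdef]
    rcases min_cases (X i ω) α with ⟨h1, _⟩ | ⟨h1, _⟩ <;> rw [h1] <;>
      [skip; skip] <;> nlinarith [abs_nonneg (X i ω), abs_nonneg α, le_abs_self (X i ω),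
        neg_abs_le (X i ω), le_abs_self α, neg_abs_le α]
  have hYmean : ∀ i, ∫ ω, Y i ω ∂μ ≤ 0 := by
    intro i
    rw [← hmean i]
    exact integral_mono (hYint i) (hXint i) (fun ω => min_le_left _ _)
  have hYsqle : ∀ i ω, Y i ω ^ 2 ≤ X i ω ^ 2 := by
    intro i ω
    simp only [hYdef]
    rcases le_total (X i ω) α with h | h
    · rw [min_eq_left h]
    · rw [min_eq_right h]
      nlinarith
  have hY2 : ∀ i, Integrable (fun ω => Y i ω ^ 2) μ := by
    intro i
    refine Integrable.mono' (hX2 i) ((hYm i).pow_const 2).aestronglyMeasurable ?_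
    filter_upwards with ω
    rw [Real.norm_eq_abs, abs_of_nonneg (sq_nonneg _)]
    exact hYsqle i ω
  have hYvar : ∀ i, ∫ ω, Y i ω ^ 2 ∂μ ≤ ∫ ω, X i ω ^ 2 ∂μ :=
    fun i => integral_mono (hY2 i) (hX2 i) (fun ω => hYsqle i ω)
  -- constants
  set u : ℝ := α * x / B with hudef
  have hu : 0 < u := by positivity
  set L : ℝ := Real.log (1 + u) with hLdef
  have hL : 0 < L := Real.log_pos (by linarith)
  set l : ℝ := L / α with hldef
  have hl : 0 < l := by positivity
  have hlα : l * α = L := by rw [hldef]; field_simp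
  have hexpla : Real.exp (l * α) = 1 + u := by
    rw [hlα]; exact Real.exp_log (by linarith)
  set c : ℝ := (Real.exp (l * α) - 1 - l * α) / α ^ 2 with hcdef
  have hcval : c = (u - L) / α ^ 2 := by rw [hcdef, hexpla, hlα]; ring
  -- mgf bound per coordinate
  have hmgf : ∀ i, mgf (Y i) μ l ≤ Real.exp (c * ∫ ω, X i ω ^ 2 ∂μ) := by
    intro i
    have := zh_mgf_bound μ (Y i) (hYm i) hα hl
      (fun ω => min_le_right _ _) (hYint i) (hYmean i) (hY2 i) (hYvar i)
    simpa [hcdef, mul_comm] using this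
  -- Chernoff
  have hfun : (fun ω => ∑ i, Y i ω) = ∑ i, Y i := by
    ext ω; simp [Finset.sum_apply]
  have hSm : Measurable (fun ω => ∑ i, Y i ω) := Finset.measurable_sum _ (fun i _ => hYm i)
  have hSint : Integrable (fun ω => Real.exp (l * (∑ i, Y i ω))) μ := by
    refine Integrable.mono' (integrable_const (Real.exp (l * (n * α))))
      ((hSm.const_mul l).exp.aestronglyMeasurable) ?_
    filter_upwards with ω
    rw [Real.norm_eq_abs, abs_of_pos (Real.exp_pos _)]
    refine Real.exp_le_exp.mpr (mul_le_mul_of_nonneg_left ?_ hl.le)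
    calc ∑ i, Y i ω ≤ ∑ _i : Fin n, α := Finset.sum_le_sum (fun i _ => min_le_right _ _)
      _ = n * α := by simp [Finset.sum_const, nsmul_eq_mul]
  have hchern := measure_ge_le_exp_mul_mgf (μ := μ) (X := fun ω => ∑ i, Y i ω) x hl.le hSint
  have hprod : mgf (fun ω => ∑ i, Y i ω) μ l = ∏ i, mgf (Y i) μ l := by
    rw [hfun]
    exact hYind.mgf_sum hYm Finset.univ
  have hprodle : ∏ i, mgf (Y i) μ l ≤ Real.exp (c * B) := by
    calc ∏ i, mgf (Y i) μ l ≤ ∏ i, Real.exp (c * ∫ ω, X i ω ^ 2 ∂μ) :=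
          Finset.prod_le_prod (fun i _ => mgf_nonneg) (fun i _ => hmgf i)
      _ = Real.exp (∑ i, c * ∫ ω, X i ω ^ 2 ∂μ) := (Real.exp_sum _ _).symm
      _ = Real.exp (c * B) := by rw [← Finset.mul_sum, ← hB]
  have hP2 : (μ {ω | x ≤ ∑ i, Y i ω}).toReal ≤ Real.exp (-l * x + c * B) := by
    calc (μ {ω | x ≤ ∑ i, Y i ω}).toReal
        ≤ Real.exp (-l * x) * mgf (fun ω => ∑ i, Y i ω) μ l := hchern
      _ ≤ Real.exp (-l * x) * Real.exp (c * B) := by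
          rw [hprod]
          exact mul_le_mul_of_nonneg_left hprodle (Real.exp_pos _).le
      _ = Real.exp (-l * x + c * B) := (Real.exp_add _ _).symm
  -- exponent comparison
  have hfinal : -l * x + c * B ≤ -(x ^ 2) / (2 * (α * x + B)) * (1 + 2 / 3 * L) := by
    have hux : α * x = u * B := by rw [hudef]; field_simp
    have e1 : -l * x + c * B = B / α ^ 2 * (u - (1 + u) * L) := by
      rw [hcval, hldef, hudef]
      field_simp
      ring
    have h3 := zh_L3 hu
    have e2 : B / α ^ 2 * (-(u ^ 2 * (3 + 2 * L) / (6 * (1 + u))))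
        = -(x ^ 2) / (2 * (α * x + B)) * (1 + 2 / 3 * L) := by
      rw [hudef]
      have h1 : (B : ℝ) + α * x ≠ 0 := by positivity
      field_simp
      ring
    calc -l * x + c * B = B / α ^ 2 * (u - (1 + u) * L) := e1
      _ ≤ B / α ^ 2 * (-(u ^ 2 * (3 + 2 * L) / (6 * (1 + u)))) :=
          mul_le_mul_of_nonneg_left h3 (by positivity)
      _ = -(x ^ 2) / (2 * (α * x + B)) * (1 + 2 / 3 * L) := e2
  -- set inclusion and conclusion
  have hsub : {ω | x ≤ ∑ i, X i ω} ⊆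
      {ω | ∃ j, α < X j ω} ∪ {ω | x ≤ ∑ i, Y i ω} := by
    intro ω hω
    by_cases hcase : ∃ j, α < X j ω
    · exact Or.inl hcase
    · push_neg at hcase
      refine Or.inr ?_
      have : ∀ i, Y i ω = X i ω := fun i => min_eq_left (hcase i)
      simp only [Set.mem_setOf_eq] at hω ⊢
      rw [Finset.sum_congr rfl (fun i _ => this i)]
      exact hω
  calc (μ {ω | x ≤ ∑ i, X i ω}).toReal
      ≤ (μ {ω | ∃ j, α < X j ω} + μ {ω | x ≤ ∑ i, Y i ω}).toReal := by
        refine ENNReal.toReal_mono ?_ ((measure_mono hsub).trans (measure_union_le _ _))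
        exact ENNReal.add_ne_top.mpr ⟨measure_ne_top _ _, measure_ne_top _ _⟩
    _ = (μ {ω | ∃ j, α < X j ω}).toReal + (μ {ω | x ≤ ∑ i, Y i ω}).toReal :=
        ENNReal.toReal_add (measure_ne_top _ _) (measure_ne_top _ _)
    _ ≤ (μ {ω | ∃ j, α < X j ω}).toReal + Real.exp (-l * x + c * B) := by linarith [hP2]
    _ ≤ (μ {ω | ∃ j, α < X j ω}).toReal +
        Real.exp (-(x ^ 2) / (2 * (α * x + B)) * (1 + 2 / 3 * L)) := by
        have := Real.exp_le_exp.mpr hfinal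
        linarith
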